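/- There exists a Borel set H ⊆ 2^ω × 2^ω such that every vertical section H_x = {y : (x,y) ∈ H} is null, and for every null set G ⊆ 2^ω there exists x ∈ 2^ω with G ⊆ H_x. -/

import Mathlib

open MeasureTheory Set Pointwise
open scoped ENNReal

/-- The Cantor space `2^ω = ℕ → ZMod 2`, with coordinatewise addition mod 2. -/
abbrev Cantor : Type := ℕ → ZMod 2

/-- The Haar probability measure on the Cantor space (equivalently, the product of
uniform measures on `ZMod 2`).  Applied to an arbitrary set it gives the outer measure,
so `μ H = 0` says that `H` has outer measure zero, i.e. `H` is null. -/
noncomputable def μ : Measure Cantor :=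
  Measure.addHaarMeasure ⟨⟨Set.univ, isCompact_univ⟩, by simp⟩

/-- A set `X ⊆ 2^ω` is strongly meager if `X + H ≠ 2^ω` for every null set `H`. -/
def StronglyMeager (X : Set Cantor) : Prop :=
  ∀ H : Set Cantor, μ H = 0 → X + H ≠ Set.univ

/-- There is a Borel set `H ⊆ 2^ω × 2^ω` with null vertical sections such that every
null set is contained in some vertical section of `H`. -/
instance : μ.Regular := by unfold μ; infer_instance
instance : μ.IsAddLeftInvariant := by unfold μ; infer_instance

lemma μ_univ : μ Set.univ = 1 :=
  MeasureTheory.Measure.addHaarMeasure_self (K₀ := ⟨⟨Set.univ, isCompact_univ⟩, by simp⟩)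

/-- The cylinder of all `y` agreeing with `w` on coordinates `< n`. -/
def Cyl (n : ℕ) (w : Cantor) : Set Cantor := {y | ∀ i < n, y i = w i}

lemma cyl_congr {n : ℕ} {w w' : Cantor} (h : ∀ i < n, w i = w' i) : Cyl n w = Cyl n w' := by
  ext y; constructor <;> intro hy i hi
  · rw [hy i hi, h i hi]
  · rw [hy i hi, h i hi]

lemma measurableSet_cyl (n : ℕ) (w : Cantor) : MeasurableSet (Cyl n w) := by
  have : Cyl n w = ⋂ (i : ℕ) (_ : i < n), (fun y : Cantor => y i) ⁻¹' {w i} := by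
    ext y; simp [Cyl]
  rw [this]
  exact MeasurableSet.iInter fun i => MeasurableSet.iInter fun _ =>
    measurable_pi_apply i (measurableSet_singleton _)

lemma μ_cyl_eq (n : ℕ) (w w' : Cantor) : μ (Cyl n w) = μ (Cyl n w') := by
  have hset : Cyl n w = ((w' - w) + ·) ⁻¹' Cyl n w' := by
    ext y
    simp only [Cyl, mem_setOf_eq, mem_preimage, Pi.add_apply, Pi.sub_apply]
    constructor <;> intro hy i hi
    · rw [hy i hi]; abel
    · have h2 : w' i - w i + y i = w' i := hy i hi
      have h3 : w' i - w i + w i = w' i := by abel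
      exact add_left_cancel (h2.trans h3.symm)
  rw [hset, measure_preimage_add]

/-- Cylinders of depth `n` partition the space into `2^n` translates. -/
lemma μ_cyl (n : ℕ) (w : Cantor) : μ (Cyl n w) = 2⁻¹ ^ n := by
  classical
  set ext : (Fin n → ZMod 2) → Cantor := fun v i => if h : i < n then v ⟨i, h⟩ else 0 with hext
  have hdisj : Pairwise (Function.onFun Disjoint (fun v => Cyl n (ext v))) := by
    intro v v' hvv'
    rw [Function.onFun, Set.disjoint_left]
    rintro y hy hy'
    apply hvv'
    funext i
    have h1 := hy i i.2
    have h2 := hy' i i.2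
    simp only [hext, i.2, dif_pos, Fin.eta] at h1 h2
    rw [← h1, ← h2]
  have hcover : (⋃ v : Fin n → ZMod 2, Cyl n (ext v)) = Set.univ := by
    ext y
    simp only [Set.mem_iUnion, Set.mem_univ, iff_true]
    refine ⟨fun i => y i, fun i hi => ?_⟩
    simp [hext, hi]
  have hμ : μ Set.univ = ∑' v : Fin n → ZMod 2, μ (Cyl n (ext v)) := by
    rw [← hcover, measure_iUnion hdisj (fun v => measurableSet_cyl n (ext v))]
  rw [μ_univ] at hμ
  have hconst : ∀ v : Fin n → ZMod 2, μ (Cyl n (ext v)) = μ (Cyl n w) :=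
    fun v => μ_cyl_eq n (ext v) w
  rw [tsum_fintype] at hμ
  simp only [hconst, Finset.sum_const, Finset.card_univ, Fintype.card_fun,
    Fintype.card_fin, ZMod.card, smul_eq_mul] at hμ
  have h2n : ((2 ^ n : ℕ) : ℝ≥0∞) * μ (Cyl n w) = 1 := by
    rw [nsmul_eq_mul] at hμ
    exact hμ.symm
  have : μ (Cyl n w) = ((2:ℝ≥0∞) ^ n)⁻¹ := by
    have h2 : ((2 ^ n : ℕ) : ℝ≥0∞) = (2:ℝ≥0∞) ^ n := by push_cast; ring
    rw [h2] at h2n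
    exact ENNReal.eq_inv_of_mul_eq_one_left (by rw [mul_comm] at h2n; exact h2n)
  rw [this, ENNReal.inv_pow]

noncomputable instance : Encodable (ZMod 2) := Fintype.toEncodable _
instance : MeasurableSpace (Option (List (ZMod 2))) := ⊤
instance : MeasurableSingletonClass (Option (List (ZMod 2))) := ⟨fun _ => trivial⟩

/-- Cylinder determined by a finite list. -/
def CylL (s : List (ZMod 2)) : Set Cantor := Cyl s.length (fun i => s.getD i 0)

lemma measurableSet_cylL (s : List (ZMod 2)) : MeasurableSet (CylL s) :=
  measurableSet_cyl _ _

lemma μ_cylL (s : List (ZMod 2)) : μ (CylL s) = 2⁻¹ ^ s.length := μ_cyl _ _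

noncomputable def CylO : Option (List (ZMod 2)) → Set Cantor
  | none => ∅
  | some s => CylL s

noncomputable def wt : Option (List (ZMod 2)) → ℝ≥0∞
  | none => 0
  | some s => 2⁻¹ ^ s.length

lemma μ_cylO (o : Option (List (ZMod 2))) : μ (CylO o) = wt o := by
  cases o with
  | none => simp [CylO, wt]
  | some s => simp [CylO, wt, μ_cylL]

lemma measurableSet_cylO (o : Option (List (ZMod 2))) : MeasurableSet (CylO o) := by
  cases o with
  | none => exact MeasurableSet.empty
  | some s => exact measurableSet_cylL s

/-- Basic neighborhoods: every open set contains a cylinder around each of its points. -/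
lemma exists_cyl_subset {U : Set Cantor} (hU : IsOpen U) {y : Cantor} (hy : y ∈ U) :
    ∃ n, Cyl n y ⊆ U := by
  rw [isOpen_pi_iff] at hU
  obtain ⟨I, u, hI, hsub⟩ := hU y hy
  refine ⟨(I.sup id) + 1, fun z hz => hsub ?_⟩
  intro i hi
  have := hz i (Nat.lt_succ_of_le (Finset.le_sup (f := id) hi))
  rw [this]; exact (hI i hi).2

/-- The canonical antichain of cylinders exhausting an open set. -/
def goodSet (U : Set Cantor) : Set (List (ZMod 2)) :=
  {s | CylL s ⊆ U ∧ ∀ m < s.length, ¬ Cyl m (fun i => s.getD i 0) ⊆ U}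

lemma goodSet_subset {U : Set Cantor} {s : List (ZMod 2)} (hs : s ∈ goodSet U) : CylL s ⊆ U :=
  hs.1

lemma goodSet_cover {U : Set Cantor} (hU : IsOpen U) {y : Cantor} (hy : y ∈ U) :
    ∃ s ∈ goodSet U, y ∈ CylL s := by
  have hex : ∃ n, Cyl n y ⊆ U := exists_cyl_subset hU hy
  classical
  let n := Nat.find hex
  refine ⟨List.ofFn (fun i : Fin n => y i), ?_, ?_⟩
  · have hlen : (List.ofFn (fun i : Fin n => y i)).length = n := List.length_ofFn
    have hgetD : ∀ i < n, (List.ofFn (fun i : Fin n => y i)).getD i 0 = y i := by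
      intro i hi
      rw [List.getD_eq_getElem _ _ (by rw [hlen]; exact hi)]
      simp
    constructor
    · have : CylL (List.ofFn (fun i : Fin n => y i)) = Cyl n y := by
        rw [CylL, hlen]
        exact cyl_congr hgetD
      rw [this]
      exact Nat.find_spec hex
    · intro m hm
      rw [hlen] at hm
      have : Cyl m (fun i => (List.ofFn (fun i : Fin n => y i)).getD i 0) = Cyl m y :=
        cyl_congr (fun i hi => hgetD i (hi.trans hm))
      rw [this]
      exact Nat.find_min hex hm
  · intro i hi
    rw [List.length_ofFn] at hi
    show y i = (List.ofFn fun i : Fin n => y i).getD i 0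
    rw [List.getD_eq_getElem _ _ (by rw [List.length_ofFn]; exact hi)]
    simp

lemma goodSet_disjoint {U : Set Cantor} {s t : List (ZMod 2)} (hs : s ∈ goodSet U)
    (ht : t ∈ goodSet U) (hst : s ≠ t) : Disjoint (CylL s) (CylL t) := by
  rw [Set.disjoint_left]
  intro y hys hyt
  -- wlog on length
  rcases lt_trichotomy s.length t.length with h | h | h
  · -- t's minimality at m = s.length is violated
    apply ht.2 s.length h
    have h1 : Cyl s.length (fun i => t.getD i 0) = Cyl s.length (fun i => s.getD i 0) := by
      apply cyl_congr
      intro i hi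
      have hyt' : y i = t.getD i 0 := hyt i (hi.trans h)
      have hys' : y i = s.getD i 0 := hys i hi
      rw [← hyt', ← hys']
    rw [h1]
    exact hs.1
  · -- equal lengths: s = t
    exfalso; apply hst
    apply List.ext_getElem h
    intro i h1 h2
    have hs' : y i = s.getD i 0 := hys i h1
    have ht' : y i = t.getD i 0 := hyt i h2
    rw [List.getD_eq_getElem _ _ h1] at hs'
    rw [List.getD_eq_getElem _ _ h2] at ht'
    rw [← hs', ← ht']
  · apply hs.2 t.length h
    have h1 : Cyl t.length (fun i => s.getD i 0) = Cyl t.length (fun i => t.getD i 0) := by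
      apply cyl_congr
      intro i hi
      have hyt' : y i = t.getD i 0 := hyt i hi
      have hys' : y i = s.getD i 0 := hys i (hi.trans h)
      rw [← hyt', ← hys']
    rw [h1]
    exact ht.1

open Classical in
/-- Injective enumeration (with `none` padding) of the canonical antichain of `U`. -/
noncomputable def sigma (U : Set Cantor) (k : ℕ) : Option (List (ZMod 2)) :=
  (Encodable.decode₂ (List (ZMod 2)) k).bind (fun s => if s ∈ goodSet U then some s else none)

lemma sigma_eq_some {U : Set Cantor} {k : ℕ} {s : List (ZMod 2)} :
    sigma U k = some s ↔ s ∈ goodSet U ∧ Encodable.encode s = k := by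
  classical
  unfold sigma
  constructor
  · intro h
    rcases ho : Encodable.decode₂ (List (ZMod 2)) k with _ | t
    · rw [ho] at h; simp at h
    · rw [ho] at h
      rw [Option.bind_some] at h
      split_ifs at h with hg
      · cases h
        exact ⟨hg, Encodable.decode₂_eq_some.mp ho⟩
  · rintro ⟨hg, henc⟩
    rw [← henc, Encodable.decode₂_encode]
    simp [hg]

lemma sigma_mem {U : Set Cantor} {k : ℕ} {s : List (ZMod 2)} (h : sigma U k = some s) :
    s ∈ goodSet U := (sigma_eq_some.mp h).1

lemma sigma_encode {U : Set Cantor} {s : List (ZMod 2)} (hs : s ∈ goodSet U) :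
    sigma U (Encodable.encode s) = some s := sigma_eq_some.mpr ⟨hs, rfl⟩

lemma sigma_disjoint (U : Set Cantor) :
    Pairwise (Function.onFun Disjoint (fun k => CylO (sigma U k))) := by
  intro k k' hkk'
  rw [Function.onFun]
  rcases h1 : sigma U k with _ | s
  · simp [CylO]
  rcases h2 : sigma U k' with _ | t
  · simp [CylO]
  simp only [CylO]
  apply goodSet_disjoint (sigma_mem h1) (sigma_mem h2)
  rintro rfl
  exact hkk' ((sigma_eq_some.mp h1).2.symm.trans (sigma_eq_some.mp h2).2)

lemma sigma_iUnion {U : Set Cantor} (hU : IsOpen U) :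
    (⋃ k, CylO (sigma U k)) = U := by
  ext y
  simp only [Set.mem_iUnion]
  constructor
  · rintro ⟨k, hk⟩
    rcases h1 : sigma U k with _ | s
    · rw [h1] at hk; simp [CylO] at hk
    · rw [h1] at hk
      exact goodSet_subset (sigma_mem h1) hk
  · intro hy
    obtain ⟨s, hs, hys⟩ := goodSet_cover hU hy
    exact ⟨Encodable.encode s, by rw [sigma_encode hs]; exact hys⟩

lemma sigma_tsum_le {U : Set Cantor} (hU : IsOpen U) :
    ∑' k, wt (sigma U k) ≤ μ U := by
  have h1 : ∑' k, wt (sigma U k) = μ (⋃ k, CylO (sigma U k)) := by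
    rw [measure_iUnion (sigma_disjoint U) (fun k => measurableSet_cylO _)]
    simp [μ_cylO]
  rw [h1, sigma_iUnion hU]

open Classical in
/-- Decode the `m`-th cylinder code from `x`. -/
noncomputable def dec (x : Cantor) (m : ℕ) : Option (List (ZMod 2)) :=
  if h : ∃ j, x (Nat.pair m j) = 1 then Encodable.decode₂ (List (ZMod 2)) (Nat.find h) else none

lemma dec_eq_some_iff {x : Cantor} {m : ℕ} {s : List (ZMod 2)} :
    dec x m = some s ↔
      x (Nat.pair m (Encodable.encode s)) = 1 ∧
        ∀ j < Encodable.encode s, x (Nat.pair m j) ≠ 1 := by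
  classical
  constructor
  · intro h
    unfold dec at h
    split_ifs at h with hex
    have henc : Nat.find hex = Encodable.encode s := (Encodable.decode₂_eq_some.mp h).symm
    refine ⟨henc ▸ Nat.find_spec hex, fun j hj => ?_⟩
    exact Nat.find_min hex (henc ▸ hj)
  · rintro ⟨h1, h2⟩
    have hex : ∃ j, x (Nat.pair m j) = 1 := ⟨_, h1⟩
    have hfind : Nat.find hex = Encodable.encode s := by
      rw [Nat.find_eq_iff]
      exact ⟨h1, h2⟩
    unfold dec
    rw [dif_pos hex, hfind, Encodable.decode₂_encode]

lemma measurableSet_coord (c : ℕ) (v : ZMod 2) : MeasurableSet {x : Cantor | x c = v} := by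
  have : {x : Cantor | x c = v} = (fun x : Cantor => x c) ⁻¹' {v} := rfl
  rw [this]; exact measurable_pi_apply c (measurableSet_singleton v)

lemma measurableSet_dec_some (m : ℕ) (s : List (ZMod 2)) :
    MeasurableSet {x : Cantor | dec x m = some s} := by
  have : {x : Cantor | dec x m = some s} =
      {x : Cantor | x (Nat.pair m (Encodable.encode s)) = 1} ∩
        ⋂ (j : ℕ) (_ : j < Encodable.encode s), {x : Cantor | x (Nat.pair m j) = 1}ᶜ := by
    ext x
    simp only [Set.mem_setOf_eq, dec_eq_some_iff, Set.mem_inter_iff,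
      Set.mem_iInter, Set.mem_compl_iff]
  rw [this]
  exact (measurableSet_coord _ _).inter
    (MeasurableSet.iInter fun j => MeasurableSet.iInter fun _ =>
      (measurableSet_coord _ _).compl)

lemma measurable_dec (m : ℕ) : Measurable (fun x => dec x m) := by
  apply measurable_to_countable'
  intro o
  cases o with
  | some s => exact measurableSet_dec_some m s
  | none =>
      have : (fun x => dec x m) ⁻¹' {none} = (⋃ s : List (ZMod 2), {x | dec x m = some s})ᶜ := by
        ext x
        simp only [Set.mem_preimage, Set.mem_singleton_iff, Set.mem_compl_iff, Set.mem_iUnion,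
          Set.mem_setOf_eq]
        constructor
        · rintro h ⟨s, hs⟩
          rw [h] at hs; cases hs
        · intro h
          rcases ho : dec x m with _ | s
          · rfl
          · exact absurd ⟨s, ho⟩ h
      rw [this]
      exact (MeasurableSet.iUnion fun s => measurableSet_dec_some m s).compl

/-- Encoding: given the intended codes `d`, build `x` whose decoding is `d`. -/
noncomputable def enc (d : ℕ → Option (List (ZMod 2))) : Cantor := fun c =>
  match d (Nat.unpair c).1 with
  | none => 0
  | some s => if (Nat.unpair c).2 = Encodable.encode s then 1 else 0

lemma dec_enc (d : ℕ → Option (List (ZMod 2))) (m : ℕ) : dec (enc d) m = d m := by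
  classical
  rcases hd : d m with _ | s
  · have hall : ∀ j, enc d (Nat.pair m j) ≠ 1 := by
      intro j
      simp only [enc, Nat.unpair_pair, hd]
      decide
    unfold dec
    rw [dif_neg]
    rintro ⟨j, hj⟩
    exact hall j hj
  · rw [dec_eq_some_iff]
    constructor
    · simp [enc, Nat.unpair_pair, hd]
    · intro j hj
      simp only [enc, Nat.unpair_pair, hd]
      rw [if_neg (Nat.ne_of_lt hj)]
      decide

/-- Partial sums of weights of the decoded cylinders in row `n`. -/
noncomputable def wsum (x : Cantor) (n k : ℕ) : ℝ≥0∞ :=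
  ∑ j ∈ Finset.range (k + 1), wt (dec x (Nat.pair n j))

/-- The truncation condition: the cylinders decoded so far have total weight `≤ 2⁻¹ ^ n`. -/
def condSet (n k : ℕ) : Set Cantor := {x | wsum x n k ≤ 2⁻¹ ^ n}

lemma measurable_wt : Measurable wt := measurable_of_countable wt

lemma measurableSet_condSet (n k : ℕ) : MeasurableSet (condSet n k) := by
  have hmeas : Measurable (fun x => wsum x n k) := by
    apply Finset.measurable_sum
    intro j _
    exact measurable_wt.comp (measurable_dec (Nat.pair n j))
  exact measurableSet_le hmeas measurable_const

/-- The universal null set. -/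
noncomputable def Huniv : Set (Cantor × Cantor) :=
  ⋂ n, ⋃ k, ⋃ s : List (ZMod 2),
    (({x | dec x (Nat.pair n k) = some s} ∩ condSet n k) ×ˢ CylL s)

lemma measurableSet_Huniv : MeasurableSet Huniv := by
  apply MeasurableSet.iInter
  intro n
  apply MeasurableSet.iUnion
  intro k
  apply MeasurableSet.iUnion
  intro s
  exact ((measurableSet_dec_some _ s).inter (measurableSet_condSet n k)).prod
    (measurableSet_cylL s)

lemma mem_Huniv {x y : Cantor} :
    (x, y) ∈ Huniv ↔ ∀ n, ∃ k, ∃ s : List (ZMod 2),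
      dec x (Nat.pair n k) = some s ∧ x ∈ condSet n k ∧ y ∈ CylL s := by
  simp only [Huniv, Set.mem_iInter, Set.mem_iUnion, Set.mem_prod, Set.mem_inter_iff,
    Set.mem_setOf_eq]
  constructor
  · intro h n
    obtain ⟨k, s, ⟨h1, h2⟩, h3⟩ := h n
    exact ⟨k, s, h1, h2, h3⟩
  · intro h n
    obtain ⟨k, s, h1, h2, h3⟩ := h n
    exact ⟨k, s, ⟨h1, h2⟩, h3⟩

open Classical in
lemma tsum_truncated_le (x : Cantor) (n : ℕ) :
    ∑' k, (if x ∈ condSet n k then wt (dec x (Nat.pair n k)) else 0) ≤ 2⁻¹ ^ n := by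
  classical
  set g : ℕ → ℝ≥0∞ := fun k => if x ∈ condSet n k then wt (dec x (Nat.pair n k)) else 0 with hg
  have key : ∀ K, ∑ k ∈ Finset.range K, g k ≤ 2⁻¹ ^ n := by
    intro K
    induction K with
    | zero => simp
    | succ K ih =>
        by_cases hK : x ∈ condSet n K
        · have hall : ∀ j, j ≤ K → x ∈ condSet n j := by
            intro j hj
            have hmono : wsum x n j ≤ wsum x n K := by
              apply Finset.sum_le_sum_of_subset
              apply Finset.range_subset_range.mpr
              omega
            exact le_trans hmono hK
          have : ∑ k ∈ Finset.range (K + 1), g k =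
              ∑ k ∈ Finset.range (K + 1), wt (dec x (Nat.pair n k)) := by
            apply Finset.sum_congr rfl
            intro j hj
            rw [Finset.mem_range] at hj
            rw [hg]
            simp only [if_pos (hall j (Nat.lt_succ_iff.mp hj))]
          rw [this]
          exact hK
        · rw [Finset.sum_range_succ, hg]
          simp only [if_neg hK, add_zero]
          exact ih
  rw [ENNReal.tsum_eq_iSup_sum]
  apply iSup_le
  intro F
  obtain ⟨N, hN⟩ := F.exists_nat_subset_range
  exact le_trans (Finset.sum_le_sum_of_subset hN) (key N)

lemma section_null (x : Cantor) : μ {y | (x, y) ∈ Huniv} = 0 := by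
  classical
  have hbound : ∀ n : ℕ, μ {y | (x, y) ∈ Huniv} ≤ 2⁻¹ ^ n := by
    intro n
    have hsub : {y | (x, y) ∈ Huniv} ⊆
        ⋃ k, (if x ∈ condSet n k then CylO (dec x (Nat.pair n k)) else ∅) := by
      intro y hy
      obtain ⟨k, s, h1, h2, h3⟩ := mem_Huniv.mp hy n
      refine Set.mem_iUnion.mpr ⟨k, ?_⟩
      rw [if_pos h2, h1]
      exact h3
    calc μ {y | (x, y) ∈ Huniv}
        ≤ μ (⋃ k, (if x ∈ condSet n k then CylO (dec x (Nat.pair n k)) else ∅)) :=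
          measure_mono hsub
      _ ≤ ∑' k, μ (if x ∈ condSet n k then CylO (dec x (Nat.pair n k)) else ∅) :=
          measure_iUnion_le _
      _ = ∑' k, (if x ∈ condSet n k then wt (dec x (Nat.pair n k)) else 0) := by
          apply tsum_congr
          intro k
          split_ifs
          · exact μ_cylO _
          · exact measure_empty
      _ ≤ 2⁻¹ ^ n := tsum_truncated_le x n
  have htend : Filter.Tendsto (fun n : ℕ => (2⁻¹ : ℝ≥0∞) ^ n) Filter.atTop (nhds 0) :=
    ENNReal.tendsto_pow_atTop_nhds_zero_of_lt_one (by norm_num)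
  have : μ {y | (x, y) ∈ Huniv} ≤ 0 :=
    ge_of_tendsto htend (Filter.Eventually.of_forall hbound)
  exact le_antisymm this zero_le


theorem exists_universal_null_set :
    ∃ H : Set (Cantor × Cantor), MeasurableSet H ∧
      (∀ x : Cantor, μ {y | (x, y) ∈ H} = 0) ∧
      (∀ G : Set Cantor, μ G = 0 → ∃ x : Cantor, G ⊆ {y | (x, y) ∈ H}) := by
  refine ⟨Huniv, measurableSet_Huniv, section_null, ?_⟩
  intro G hG
  -- choose small open supersets
  have hops : ∀ n : ℕ, ∃ U, G ⊆ U ∧ IsOpen U ∧ μ U < 2⁻¹ ^ n := by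
    intro n
    have hlt : μ G < 2⁻¹ ^ n := by
      rw [hG]
      exact ENNReal.pow_pos (by norm_num) n
    obtain ⟨U, hU1, hU2, hU3⟩ := G.exists_isOpen_lt_of_lt _ hlt
    exact ⟨U, hU1, hU2, hU3⟩
  choose U hGU hUopen hUlt using hops
  set d : ℕ → Option (List (ZMod 2)) :=
    fun m => sigma (U (Nat.unpair m).1) (Nat.unpair m).2 with hd
  set x : Cantor := enc d with hx
  have hdec : ∀ n k, dec x (Nat.pair n k) = sigma (U n) k := by
    intro n k
    rw [hx, dec_enc, hd]
    simp only [Nat.unpair_pair]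
  have hcond : ∀ n k, x ∈ condSet n k := by
    intro n k
    show wsum x n k ≤ 2⁻¹ ^ n
    have : wsum x n k = ∑ j ∈ Finset.range (k + 1), wt (sigma (U n) j) := by
      apply Finset.sum_congr rfl
      intro j _
      rw [hdec]
    rw [this]
    calc ∑ j ∈ Finset.range (k + 1), wt (sigma (U n) j)
        ≤ ∑' j, wt (sigma (U n) j) := ENNReal.sum_le_tsum _
      _ ≤ μ (U n) := sigma_tsum_le (hUopen n)
      _ ≤ 2⁻¹ ^ n := (hUlt n).le
  refine ⟨x, fun y hy => ?_⟩
  rw [Set.mem_setOf_eq, mem_Huniv]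
  intro n
  obtain ⟨s, hs, hys⟩ := goodSet_cover (hUopen n) (hGU n hy)
  exact ⟨Encodable.encode s, s, by rw [hdec]; exact sigma_encode hs, hcond _ _, hys⟩
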